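/- Let r ≥ 1, let ψ : ℝ^r → ℝ be twice continuously differentiable with ψ(𝟏) = 1, let β ∈ ℝ^r, α_S > 0, T > 0, and fix j ∈ {1,…,r} with ∂_jψ(𝟏) > 0. For x with ∂_iψ(x) ≠ 0 for all i, define κ̄_{jl}(x) = ψ(x)·∂²_{jl}ψ(x)/(∂_jψ(x)·∂_lψ(x)). Suppose Θ : [0,T] → ℝ^r, S : [0,T] → ℝ, SI : [0,T] → ℝ^r and SS_j : [0,T] → ℝ satisfy, for all t ∈ [0,T]: ψ(Θ(t)) > 0, ∂_iψ(Θ(t)) ≠ 0 for all i, Θ_i'(t) = −β_i·SI_i(t)/(α_S·∂_iψ(Θ(t))) for all i, S(t) = α_S·ψ(Θ(t)), and SS_j'(t) = −2·∑_{l=1}^r β_l·κ̄_{jl}(Θ(t))·SI_l(t)·SS_j(t)/S(t), with Θ(0) = 𝟏 and SS_j(0) = α_S²·∂_jψ(𝟏). Then SS_j(t) = α_S²·(∂_jψ(Θ(t)))²/∂_jψ(𝟏) for all t ∈ [0,T]. -/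

import Mathlib

/-- Partial derivative of `ψ : (Fin r → ℝ) → ℝ` in the `j`-th coordinate at `x`. -/
noncomputable def pd {r : ℕ} (j : Fin r) (ψ : (Fin r → ℝ) → ℝ) (x : Fin r → ℝ) : ℝ :=
  deriv (fun t => ψ (Function.update x j t)) (x j)

lemma pd_eq_fderiv {r : ℕ} (j : Fin r) {f : (Fin r → ℝ) → ℝ} {x : Fin r → ℝ}
    (hf : DifferentiableAt ℝ f x) :
    pd j f x = fderiv ℝ f x (Pi.single j 1) := by
  have h3 := hasDerivAt_update x j (x j)
  have h2 : HasFDerivAt f (fderiv ℝ f x) (Function.update x j (x j)) := by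
    rw [Function.update_eq_self]; exact hf.hasFDerivAt
  have h1 := h2.comp_hasDerivAt (x j) h3
  have h1' : HasDerivAt (fun t => f (Function.update x j t))
      (fderiv ℝ f x (Pi.single j 1)) (x j) := by
    exact h1
  exact h1'.deriv

lemma hasDerivAt_comp_pi {r : ℕ} {f : (Fin r → ℝ) → ℝ} {Θ : ℝ → Fin r → ℝ}
    {v : Fin r → ℝ} {t : ℝ} (hf : DifferentiableAt ℝ f (Θ t))
    (hΘ : ∀ i, HasDerivAt (fun s => Θ s i) (v i) t) :
    HasDerivAt (fun s => f (Θ s)) (∑ l, v l * pd l f (Θ t)) t := by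
  have hΘ' : HasDerivAt Θ v t := hasDerivAt_pi.mpr hΘ
  have h := hf.hasFDerivAt.comp_hasDerivAt t hΘ'
  have hv : v = ∑ l, v l • (Pi.single l (1 : ℝ) : Fin r → ℝ) := by
    ext i
    simp [Finset.sum_apply, Pi.single_apply]
  have he : (fderiv ℝ f (Θ t)) v = ∑ l, v l * pd l f (Θ t) := by
    conv_lhs => rw [hv]
    rw [map_sum]
    refine Finset.sum_congr rfl fun l _ => ?_
    rw [map_smul, pd_eq_fderiv l hf]
    simp [smul_eq_mul]
  rwa [he] at h

lemma contDiff_pd {r : ℕ} (j : Fin r) {ψ : (Fin r → ℝ) → ℝ} (hC : ContDiff ℝ 2 ψ) :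
    ContDiff ℝ 1 (pd j ψ) := by
  have hψd : Differentiable ℝ ψ := hC.differentiable (by norm_num)
  have he : pd j ψ = fun x => fderiv ℝ ψ x (Pi.single j 1) :=
    funext fun x => pd_eq_fderiv j (hψd x)
  rw [he]
  exact (hC.fderiv_right (by norm_num)).clm_apply contDiff_const

/-- Identity (eq:DSS): in the large graph limit of the multilayer SIR process, the
density of susceptible–susceptible `j`-edges satisfies
`SSⱼ(t) = α_S²·(∂ⱼψ(Θ(t)))²/∂ⱼψ(𝟏)`, where `κ̄_{jl}(x) = ψ(x)·∂²_{jl}ψ(x)/(∂ⱼψ(x)·∂ₗψ(x))`. -/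
theorem susceptible_susceptible_edges_eq (r : ℕ) (hr : 1 ≤ r) (ψ : (Fin r → ℝ) → ℝ)
    (hC : ContDiff ℝ 2 ψ) (hψ1 : ψ (fun _ => 1) = 1)
    (β : Fin r → ℝ) (αS : ℝ) (hαS : 0 < αS) (T : ℝ) (hT : 0 < T)
    (j : Fin r) (hj : 0 < pd j ψ (fun _ => 1))
    (Θ : ℝ → Fin r → ℝ) (S : ℝ → ℝ) (SI : ℝ → Fin r → ℝ) (SSj : ℝ → ℝ)
    (hψpos : ∀ t ∈ Set.Icc (0 : ℝ) T, 0 < ψ (Θ t))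
    (hpd : ∀ t ∈ Set.Icc (0 : ℝ) T, ∀ i, pd i ψ (Θ t) ≠ 0)
    (hΘ : ∀ t ∈ Set.Icc (0 : ℝ) T, ∀ i, HasDerivAt (fun s => Θ s i)
        (-(β i * SI t i) / (αS * pd i ψ (Θ t))) t)
    (hSeq : ∀ t ∈ Set.Icc (0 : ℝ) T, S t = αS * ψ (Θ t))
    (hSS : ∀ t ∈ Set.Icc (0 : ℝ) T, HasDerivAt SSj
        (-2 * ∑ l, β l * (ψ (Θ t) * pd l (pd j ψ) (Θ t) / (pd j ψ (Θ t) * pd l ψ (Θ t)))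
            * SI t l * SSj t / S t) t)
    (hΘ0 : Θ 0 = fun _ => 1) (hSS0 : SSj 0 = αS ^ 2 * pd j ψ (fun _ => 1)) :
    ∀ t ∈ Set.Icc (0 : ℝ) T,
      SSj t = αS ^ 2 * (pd j ψ (Θ t)) ^ 2 / pd j ψ (fun _ => 1) := by
  have hpdd : Differentiable ℝ (pd j ψ) := (contDiff_pd j hC).differentiable one_ne_zero
  set h : ℝ → ℝ := fun s => SSj s / (pd j ψ (Θ s)) ^ 2 with hh
  have hderiv : ∀ t ∈ Set.Icc (0 : ℝ) T, HasDerivAt h 0 t := by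
    intro t ht
    have hP : pd j ψ (Θ t) ≠ 0 := hpd t ht j
    have hψt : ψ (Θ t) ≠ 0 := (hψpos t ht).ne'
    have hPder : HasDerivAt (fun s => pd j ψ (Θ s))
        (∑ l, (-(β l * SI t l) / (αS * pd l ψ (Θ t))) * pd l (pd j ψ) (Θ t)) t :=
      hasDerivAt_comp_pi (hpdd (Θ t)) (fun i => hΘ t ht i)
    have hP2 : HasDerivAt (fun s => (pd j ψ (Θ s)) ^ 2)
        (2 * pd j ψ (Θ t) *
          (∑ l, (-(β l * SI t l) / (αS * pd l ψ (Θ t))) * pd l (pd j ψ) (Θ t))) t := by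
      have := hPder.pow 2
      norm_num at this
      exact this
    have hSS' := hSS t ht
    rw [hSeq t ht] at hSS'
    have hnum := hSS'.div hP2 (pow_ne_zero 2 hP)
    have key : (-2 * ∑ l, β l * (ψ (Θ t) * pd l (pd j ψ) (Θ t)
            / (pd j ψ (Θ t) * pd l ψ (Θ t))) * SI t l * SSj t / (αS * ψ (Θ t)))
          * (pd j ψ (Θ t)) ^ 2
        = SSj t * (2 * pd j ψ (Θ t) *
            (∑ l, (-(β l * SI t l) / (αS * pd l ψ (Θ t))) * pd l (pd j ψ) (Θ t))) := by
      rw [Finset.mul_sum, Finset.sum_mul, Finset.mul_sum, Finset.mul_sum]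
      refine Finset.sum_congr rfl fun l _ => ?_
      have hPl : pd l ψ (Θ t) ≠ 0 := hpd t ht l
      field_simp
    rw [key, sub_self, zero_div] at hnum
    exact hnum
  have hcont : ContinuousOn h (Set.Icc 0 T) := fun t ht =>
    (hderiv t ht).continuousAt.continuousWithinAt
  have hconst : ∀ t ∈ Set.Icc (0 : ℝ) T, h t = h 0 :=
    constant_of_has_deriv_right_zero hcont fun t ht =>
      (hderiv t (Set.mem_Icc_of_Ico ht)).hasDerivWithinAt
  intro t ht
  have hP : pd j ψ (Θ t) ≠ 0 := hpd t ht j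
  have hD1 : pd j ψ (fun _ => 1) ≠ 0 := hj.ne'
  have h0 : h 0 = αS ^ 2 / pd j ψ (fun _ => 1) := by
    simp only [hh, hΘ0, hSS0]
    field_simp
  have := hconst t ht
  rw [h0] at this
  have ht' : SSj t / (pd j ψ (Θ t)) ^ 2 = αS ^ 2 / pd j ψ (fun _ => 1) := this
  field_simp at ht' ⊢
  linarith [ht']
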